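/- Fix a real r ≥ 1 and a family F of subsets of a finite ground set. Let X be a set that is inclusion-maximal among sets satisfying |F(X)| ≥ r^{-|X|}·|F|. Then F(X) is r-spread. -/
import Mathlib


/-- For a family `F` of finite sets and a set `X`,
`F(X) := {F \ X : F ∈ F, X ⊆ F}`. -/
def restrictAt {α : Type*} [DecidableEq α] (F : Finset (Finset α)) (X : Finset α) :
    Finset (Finset α) :=
  (F.filter fun A => X ⊆ A).image fun A => A \ X

/-- A family `G` is `r`-spread if `|G(Y)| ≤ r^{-|Y|}·|G|` for every set `Y`. -/
def IsSpread {α : Type*} [DecidableEq α] (r : ℝ) (F : Finset (Finset α)) : Prop :=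
  ∀ Y : Finset α, ((restrictAt F Y).card : ℝ) ≤ r ^ (-(Y.card : ℤ)) * F.card

lemma restrict_restrict_subset {α : Type*} [DecidableEq α] (F : Finset (Finset α))
    (X Y : Finset α) :
    restrictAt (restrictAt F X) Y ⊆ restrictAt F (X ∪ Y) := by
  intro C hC
  simp only [restrictAt, Finset.mem_image, Finset.mem_filter] at hC ⊢
  obtain ⟨B, ⟨hB, hYB⟩, rfl⟩ := hC
  obtain ⟨A, ⟨hA, hXA⟩, rfl⟩ := hB
  exact ⟨A, ⟨hA, Finset.union_subset hXA (hYB.trans (Finset.sdiff_subset))⟩,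
    (sdiff_sdiff A X Y).symm ▸ rfl⟩

/-- **Lemma 7 of the paper.** Fix `r ≥ 1` and a family `F` of subsets of a
finite ground set.  If `X` is inclusion-maximal among sets satisfying
`|F(X)| ≥ r^{-|X|}·|F|`, then `F(X)` is `r`-spread. -/
theorem spread_maximal_restriction {α : Type*} [DecidableEq α] [Fintype α] {r : ℝ}
    (hr : 1 ≤ r) (F : Finset (Finset α)) (X : Finset α)
    (hX : r ^ (-(X.card : ℤ)) * F.card ≤ ((restrictAt F X).card : ℝ))
    (hmax : ∀ Y : Finset α, X ⊂ Y →
      ¬ (r ^ (-(Y.card : ℤ)) * F.card ≤ ((restrictAt F Y).card : ℝ))) :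
    IsSpread r (restrictAt F X) := by
  have hr0 : (0:ℝ) < r := lt_of_lt_of_le one_pos hr
  intro Y
  rcases Y.eq_empty_or_nonempty with rfl | hY
  · have h : (restrictAt (restrictAt F X) ∅).card ≤ (restrictAt F X).card :=
      le_trans Finset.card_image_le (Finset.card_filter_le _ _)
    simp only [Finset.card_empty, Nat.cast_zero, neg_zero, zpow_zero, one_mul]
    exact_mod_cast h
  by_cases hdisj : Disjoint Y X
  · have hXY : X ⊂ X ∪ Y := by
      obtain ⟨y, hy⟩ := hY
      refine Finset.ssubset_iff_of_subset Finset.subset_union_left |>.mpr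
        ⟨y, Finset.mem_union_right _ hy, fun hyX => (hdisj.forall_ne_finset hy hyX) rfl⟩
    have h1 : ((restrictAt (restrictAt F X) Y).card : ℝ) ≤ (restrictAt F (X ∪ Y)).card :=
      Nat.cast_le.mpr (Finset.card_le_card (restrict_restrict_subset F X Y))
    have h2 : ((restrictAt F (X ∪ Y)).card : ℝ) < r ^ (-((X ∪ Y).card : ℤ)) * F.card :=
      lt_of_not_ge fun h => hmax (X ∪ Y) hXY h
    have hcard : (X ∪ Y).card = X.card + Y.card := Finset.card_union_of_disjoint hdisj.symm
    calc ((restrictAt (restrictAt F X) Y).card : ℝ)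
        ≤ (restrictAt F (X ∪ Y)).card := h1
      _ ≤ r ^ (-((X ∪ Y).card : ℤ)) * F.card := h2.le
      _ = r ^ (-(Y.card : ℤ)) * (r ^ (-(X.card : ℤ)) * F.card) := by
          rw [hcard]; push_cast
          rw [neg_add, zpow_add₀ hr0.ne', mul_assoc, mul_comm (r ^ (-(X.card:ℤ)))]; ring
      _ ≤ r ^ (-(Y.card : ℤ)) * (restrictAt F X).card :=
          mul_le_mul_of_nonneg_left hX (zpow_nonneg hr0.le _)
  · have hempty : restrictAt (restrictAt F X) Y = ∅ := by
      rw [restrictAt, Finset.image_eq_empty, Finset.filter_eq_empty_iff]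
      intro B hB hYB
      simp only [restrictAt, Finset.mem_image, Finset.mem_filter] at hB
      obtain ⟨A, _, rfl⟩ := hB
      exact hdisj (Finset.disjoint_of_subset_left hYB (Finset.sdiff_disjoint))
    rw [hempty]
    simp only [Finset.card_empty, Nat.cast_zero]
    positivity
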